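/- Let q be a unit quaternion and Q a pure unit quaternion such that q·Q·q⁻¹ = -Q. Then q is itself a pure unit quaternion (Re q = 0), and q is perpendicular to Q, i.e. Re(q·Q) = 0. -/

import Mathlib

open Quaternion

noncomputable section

/-- The quaternion `i`. -/
def qi : ℍ[ℝ] := ⟨0, 1, 0, 0⟩

/-- If a unit quaternion `q` conjugates the pure unit quaternion `Q` to `-Q`, then `q`
is itself a pure unit quaternion and `q` is perpendicular to `Q`. -/
theorem pure_and_perp_of_conj_neg (q Q : ℍ[ℝ])
    (hqnorm : ‖q‖ = 1) (hQnorm : ‖Q‖ = 1) (hQre : Q.re = 0)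
    (hconj : q * Q * q⁻¹ = -Q) :
    q.re = 0 ∧ (q * Q).re = 0 := by
  have hq0 : q ≠ 0 := by
    intro h; rw [h] at hqnorm; simp at hqnorm
  have hmul : q * Q = -Q * q := by
    have := congrArg (· * q) hconj
    simpa [mul_assoc, inv_mul_cancel₀ hq0] using this
  have hQn : Q.re^2 + Q.imI^2 + Q.imJ^2 + Q.imK^2 = 1 := by
    have : ‖Q‖^2 = 1 := by rw [hQnorm]; norm_num
    have h := Quaternion.normSq_eq_norm_mul_self Q
    rw [Quaternion.normSq_def'] at h
    nlinarith
  have h1 := congrArg (fun x : ℍ[ℝ] => x.re) hmul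
  have h2 := congrArg (fun x : ℍ[ℝ] => x.imI) hmul
  have h3 := congrArg (fun x : ℍ[ℝ] => x.imJ) hmul
  have h4 := congrArg (fun x : ℍ[ℝ] => x.imK) hmul
  simp [Quaternion.re_mul, Quaternion.imI_mul, Quaternion.imJ_mul,
    Quaternion.imK_mul, hQre] at h1 h2 h3 h4
  have e1 : q.re * Q.imI = 0 := by linarith
  have e2 : q.re * Q.imJ = 0 := by linarith
  have e3 : q.re * Q.imK = 0 := by linarith
  constructor
  · have : q.re * (Q.imI^2 + Q.imJ^2 + Q.imK^2) = 0 := by linear_combination Q.imI * e1 + Q.imJ * e2 + Q.imK * e3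
    have hs : Q.imI^2 + Q.imJ^2 + Q.imK^2 = 1 := by nlinarith [hQn]
    rw [hs, mul_one] at this
    exact this
  · simp [Quaternion.re_mul, hQre]
    linarith
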